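/- On an n-dimensional inner product space, the full contraction of the p-th power of the metric double form satisfies c_g^p(g^p) = n!p!/(n-p)!, for 0 ≤ p ≤ n. -/

import Mathlib

open scoped RealInnerProductSpace BigOperators

/-- Double forms of bidegree `(p,q)` on `V`, modelled as real-valued maps on
`p`-tuples tensor `q`-tuples of vectors (to be evaluated on alternating arguments). -/
abbrev DoubleForm (V : Type*) (p q : ℕ) := (Fin p → V) → (Fin q → V) → ℝ

/-- The metric (inner product) as a `(1,1)` double form. -/
noncomputable def gForm (V : Type*) [NormedAddCommGroup V] [InnerProductSpace ℝ V] :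
    DoubleForm V 1 1 := fun v w => (inner ℝ (v 0) (w 0) : ℝ)

/-- The product of double forms in the bigraded algebra `Ω(V)`, given by the
standard (normalized) shuffle/permutation sum in each slot. -/
noncomputable def dfMul {V : Type*} {p q r s : ℕ}
    (ω : DoubleForm V p q) (η : DoubleForm V r s) : DoubleForm V (p + r) (q + s) :=
  fun v w =>
    (1 / ((p.factorial * r.factorial * q.factorial * s.factorial : ℕ) : ℝ)) *
      ∑ σ : Equiv.Perm (Fin (p + r)), ∑ τ : Equiv.Perm (Fin (q + s)),
        ((Equiv.Perm.sign σ : ℤ) : ℝ) * ((Equiv.Perm.sign τ : ℤ) : ℝ) *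
          (ω (fun i => v (σ (Fin.castAdd r i))) (fun j => w (τ (Fin.castAdd s j))) *
            η (fun i => v (σ (Fin.natAdd p i))) (fun j => w (τ (Fin.natAdd q j))))

/-- The contraction operator `c_g`, summing insertions of an orthonormal basis
vector into both slots. -/
noncomputable def dfContr {V : Type*} [NormedAddCommGroup V] [InnerProductSpace ℝ V]
    [FiniteDimensional ℝ V] {p q : ℕ} (ω : DoubleForm V (p + 1) (q + 1)) : DoubleForm V p q :=
  fun v w => ∑ i, ω (Fin.cons (stdOrthonormalBasis ℝ V i) v)
      (Fin.cons (stdOrthonormalBasis ℝ V i) w)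

/-- Powers `g^p` of the metric in the algebra of double forms. -/
noncomputable def gpow (V : Type*) [NormedAddCommGroup V] [InnerProductSpace ℝ V] :
    (p : ℕ) → DoubleForm V p p
  | 0 => fun _ _ => 1
  | p + 1 => dfMul (gpow V p) (gForm V)

/-- Powers `R^k` of a `(2,2)` double form. -/
noncomputable def dfPow {V : Type*} (R : DoubleForm V 2 2) :
    (k : ℕ) → DoubleForm V (2 * k) (2 * k)
  | 0 => fun _ _ => 1
  | k + 1 => dfMul (dfPow R k) R

/-- Full contraction `c_g^m` of an `(m,m)` double form, as a scalar. -/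
noncomputable def dfFullContr {V : Type*} [NormedAddCommGroup V] [InnerProductSpace ℝ V]
    [FiniteDimensional ℝ V] : (m : ℕ) → DoubleForm V m m → ℝ
  | 0, ω => ω (fun i => i.elim0) (fun i => i.elim0)
  | m + 1, ω => dfFullContr m (dfContr ω)

/-- Contraction `c_g^m` of an `(m+1,m+1)` double form down to a `(1,1)` form. -/
noncomputable def dfContrToOne {V : Type*} [NormedAddCommGroup V] [InnerProductSpace ℝ V]
    [FiniteDimensional ℝ V] : (m : ℕ) → DoubleForm V (m + 1) (m + 1) → DoubleForm V 1 1
  | 0, ω => ω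
  | m + 1, ω => dfContrToOne m (dfContr ω)

section Aux

open Equiv Finset

private lemma sign_cast_sq {ι : Type*} [DecidableEq ι] [Fintype ι] (σ : Equiv.Perm ι) :
    ((Equiv.Perm.sign σ : ℤ) : ℝ) * ((Equiv.Perm.sign σ : ℤ) : ℝ) = 1 := by
  rw [← Int.cast_mul, ← Units.val_mul, Int.units_mul_self]; norm_num

/-- Double permutation sum of products of matrix entries equals `m! * det`. -/
private lemma key1 {m : ℕ} (B : Matrix (Fin m) (Fin m) ℝ) :
    ∑ σ : Equiv.Perm (Fin m), ∑ τ : Equiv.Perm (Fin m),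
      ((Equiv.Perm.sign σ : ℤ) : ℝ) * ((Equiv.Perm.sign τ : ℤ) : ℝ) * ∏ i, B (σ i) (τ i)
      = (m.factorial : ℝ) * B.det := by
  have h : ∀ σ : Equiv.Perm (Fin m), ∑ τ : Equiv.Perm (Fin m),
      ((Equiv.Perm.sign σ : ℤ) : ℝ) * ((Equiv.Perm.sign τ : ℤ) : ℝ) * ∏ i, B (σ i) (τ i)
      = B.det := by
    intro σ
    rw [← Equiv.sum_comp (Equiv.mulRight σ)
      (fun τ => ((Equiv.Perm.sign σ : ℤ) : ℝ) * ((Equiv.Perm.sign τ : ℤ) : ℝ) * ∏ i, B (σ i) (τ i))]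
    have hstep : ∀ π : Equiv.Perm (Fin m),
        ((Equiv.Perm.sign σ : ℤ) : ℝ) * ((Equiv.Perm.sign (π * σ) : ℤ) : ℝ)
          * ∏ i, B (σ i) ((π * σ) i)
        = ((Equiv.Perm.sign π : ℤ) : ℝ) * ∏ i, B i (π i) := by
      intro π
      have h1 : ∀ i, (π * σ) i = π (σ i) := fun i => rfl
      have h2 : ∏ i, B (σ i) (π (σ i)) = ∏ i, B i (π i) :=
        Equiv.prod_comp σ (fun i => B i (π i))
      have h3 : ((Equiv.Perm.sign (π * σ) : ℤ) : ℝ)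
          = ((Equiv.Perm.sign π : ℤ) : ℝ) * ((Equiv.Perm.sign σ : ℤ) : ℝ) := by
        rw [Equiv.Perm.sign_mul, Units.val_mul, Int.cast_mul]
      simp only [h1, h2, h3]
      linear_combination ((Equiv.Perm.sign π : ℤ) : ℝ) * (∏ i, B i (π i)) * sign_cast_sq σ
    simp only [Equiv.coe_mulRight]
    rw [Finset.sum_congr rfl (fun π _ => hstep π)]
    rw [← Matrix.det_transpose B, Matrix.det_apply']
    simp only [Matrix.transpose_apply]
  rw [Finset.sum_congr rfl (fun σ _ => h σ), Finset.sum_const, Finset.card_univ,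
    Fintype.card_perm, Fintype.card_fin, nsmul_eq_mul]

/-- Extension of a permutation of `Fin p` to `Fin (p+1)` fixing the extra point. -/
private def extPerm {p : ℕ} (α : Equiv.Perm (Fin p)) : Equiv.Perm (Fin (p + 1)) :=
  (finSumFinEquiv (m := p) (n := 1)).permCongr (Equiv.sumCongr α (Equiv.refl (Fin 1)))

private lemma extPerm_castAdd {p : ℕ} (α : Equiv.Perm (Fin p)) (i : Fin p) :
    extPerm α (Fin.castAdd 1 i) = Fin.castAdd 1 (α i) := by
  simp [extPerm, Equiv.permCongr_apply, finSumFinEquiv_symm_apply_castAdd]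

private lemma extPerm_natAdd {p : ℕ} (α : Equiv.Perm (Fin p)) (j : Fin 1) :
    extPerm α (Fin.natAdd p j) = Fin.natAdd p j := by
  simp [extPerm, Equiv.permCongr_apply, finSumFinEquiv_symm_apply_natAdd]

private lemma sign_extPerm {p : ℕ} (α : Equiv.Perm (Fin p)) :
    Equiv.Perm.sign (extPerm α) = Equiv.Perm.sign α := by
  simp [extPerm, Equiv.Perm.sign_permCongr, Equiv.Perm.sign_sumCongr]

/-- Absorbing an inner permutation sum over `S_p` into a sum over `S_{p+1}`. -/
private lemma absorb {p : ℕ} (G : Equiv.Perm (Fin (p + 1)) → ℝ) :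
    ∑ σ : Equiv.Perm (Fin (p + 1)), ∑ α : Equiv.Perm (Fin p),
      ((Equiv.Perm.sign σ : ℤ) : ℝ) * ((Equiv.Perm.sign α : ℤ) : ℝ) * G (σ * extPerm α)
    = (p.factorial : ℝ) * ∑ σ : Equiv.Perm (Fin (p + 1)), ((Equiv.Perm.sign σ : ℤ) : ℝ) * G σ := by
  rw [Finset.sum_comm]
  have h : ∀ α : Equiv.Perm (Fin p),
      ∑ σ : Equiv.Perm (Fin (p + 1)),
        ((Equiv.Perm.sign σ : ℤ) : ℝ) * ((Equiv.Perm.sign α : ℤ) : ℝ) * G (σ * extPerm α)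
      = ∑ σ : Equiv.Perm (Fin (p + 1)), ((Equiv.Perm.sign σ : ℤ) : ℝ) * G σ := by
    intro α
    rw [← Equiv.sum_comp (Equiv.mulRight (extPerm α))
      (fun σ => ((Equiv.Perm.sign σ : ℤ) : ℝ) * G σ)]
    refine Finset.sum_congr rfl fun σ _ => ?_
    simp only [Equiv.coe_mulRight]
    have h3 : ((Equiv.Perm.sign (σ * extPerm α) : ℤ) : ℝ)
        = ((Equiv.Perm.sign σ : ℤ) : ℝ) * ((Equiv.Perm.sign α : ℤ) : ℝ) := by
      rw [Equiv.Perm.sign_mul, sign_extPerm, Units.val_mul, Int.cast_mul]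
    rw [h3]
  rw [Finset.sum_congr rfl (fun α _ => h α), Finset.sum_const, Finset.card_univ,
    Fintype.card_perm, Fintype.card_fin, nsmul_eq_mul]

private lemma natAdd_zero_eq_last (p : ℕ) : Fin.natAdd p (0 : Fin 1) = Fin.last p := by
  ext; simp

/-- The inductive step for `gpow_eq`, at the level of matrix entries. -/
private lemma step {p : ℕ} (B : Fin (p + 1) → Fin (p + 1) → ℝ) :
    ∑ σ : Equiv.Perm (Fin (p + 1)), ∑ τ : Equiv.Perm (Fin (p + 1)),
      ((Equiv.Perm.sign σ : ℤ) : ℝ) * ((Equiv.Perm.sign τ : ℤ) : ℝ) *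
        ((p.factorial : ℝ) *
            (Matrix.of fun i j : Fin p => B (σ (Fin.castAdd 1 i)) (τ (Fin.castAdd 1 j))).det *
          B (σ (Fin.natAdd p 0)) (τ (Fin.natAdd p 0)))
    = (p.factorial : ℝ) * (p.factorial : ℝ) * ((p + 1).factorial : ℝ) * (Matrix.of B).det := by
  have hprod : ∀ (σ τ : Equiv.Perm (Fin (p + 1))),
      ∏ i : Fin (p + 1), (Matrix.of B) (σ i) (τ i)
        = (∏ i : Fin p, B (σ (Fin.castAdd 1 i)) (τ (Fin.castAdd 1 i))) *
            B (σ (Fin.natAdd p 0)) (τ (Fin.natAdd p 0)) := by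
    intro σ τ
    rw [Fin.prod_univ_castSucc]
    simp only [Matrix.of_apply, natAdd_zero_eq_last]
    rfl
  calc
    ∑ σ : Equiv.Perm (Fin (p + 1)), ∑ τ : Equiv.Perm (Fin (p + 1)),
      ((Equiv.Perm.sign σ : ℤ) : ℝ) * ((Equiv.Perm.sign τ : ℤ) : ℝ) *
        ((p.factorial : ℝ) *
            (Matrix.of fun i j : Fin p => B (σ (Fin.castAdd 1 i)) (τ (Fin.castAdd 1 j))).det *
          B (σ (Fin.natAdd p 0)) (τ (Fin.natAdd p 0)))
      = ∑ τ : Equiv.Perm (Fin (p + 1)), ((Equiv.Perm.sign τ : ℤ) : ℝ) * ((p.factorial : ℝ) *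
          ∑ σ : Equiv.Perm (Fin (p + 1)), ∑ α : Equiv.Perm (Fin p),
            ((Equiv.Perm.sign σ : ℤ) : ℝ) * ((Equiv.Perm.sign α : ℤ) : ℝ) *
              ((∏ i : Fin p, B ((σ * extPerm α) (Fin.castAdd 1 i)) (τ (Fin.castAdd 1 i))) *
                B ((σ * extPerm α) (Fin.natAdd p 0)) (τ (Fin.natAdd p 0)))) := by
        rw [Finset.sum_comm]
        refine Finset.sum_congr rfl fun τ _ => ?_
        rw [Finset.mul_sum, Finset.mul_sum]
        refine Finset.sum_congr rfl fun σ _ => ?_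
        rw [Matrix.det_apply']
        simp only [Finset.mul_sum, Finset.sum_mul, Matrix.of_apply]
        refine Finset.sum_congr rfl fun α _ => ?_
        have h1 : ∀ i, (σ * extPerm α) (Fin.castAdd 1 i) = σ (Fin.castAdd 1 (α i)) := by
          intro i; rw [Equiv.Perm.mul_apply, extPerm_castAdd]
        have h2 : (σ * extPerm α) (Fin.natAdd p 0) = σ (Fin.natAdd p 0) := by
          rw [Equiv.Perm.mul_apply, extPerm_natAdd]
        simp only [h1, h2]
        ring
    _ = ∑ τ : Equiv.Perm (Fin (p + 1)), ((Equiv.Perm.sign τ : ℤ) : ℝ) * ((p.factorial : ℝ) *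
          ((p.factorial : ℝ) * ∑ σ : Equiv.Perm (Fin (p + 1)),
            ((Equiv.Perm.sign σ : ℤ) : ℝ) *
              ((∏ i : Fin p, B (σ (Fin.castAdd 1 i)) (τ (Fin.castAdd 1 i))) *
                B (σ (Fin.natAdd p 0)) (τ (Fin.natAdd p 0))))) := by
        refine Finset.sum_congr rfl fun τ _ => ?_
        rw [absorb (fun σ => (∏ i : Fin p, B (σ (Fin.castAdd 1 i)) (τ (Fin.castAdd 1 i))) *
                B (σ (Fin.natAdd p 0)) (τ (Fin.natAdd p 0)))]
    _ = (p.factorial : ℝ) * (p.factorial : ℝ) *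
          ∑ τ : Equiv.Perm (Fin (p + 1)), ∑ σ : Equiv.Perm (Fin (p + 1)),
            ((Equiv.Perm.sign σ : ℤ) : ℝ) * ((Equiv.Perm.sign τ : ℤ) : ℝ) *
              ∏ i : Fin (p + 1), (Matrix.of B) (σ i) (τ i) := by
        simp only [Finset.mul_sum]
        refine Finset.sum_congr rfl fun τ _ => Finset.sum_congr rfl fun σ _ => ?_
        rw [hprod σ τ]
        ring
    _ = (p.factorial : ℝ) * (p.factorial : ℝ) * ((p + 1).factorial : ℝ) * (Matrix.of B).det := by
        rw [Finset.sum_comm, key1 (Matrix.of B)]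
        ring

/-- The `p`-th power of the metric is `p!` times the Gram determinant. -/
private lemma gpow_eq {V : Type*} [NormedAddCommGroup V] [InnerProductSpace ℝ V] :
    ∀ (p : ℕ) (v w : Fin p → V),
      gpow V p v w
        = (p.factorial : ℝ) * (Matrix.of fun i j => (inner ℝ (v i) (w j) : ℝ)).det := by
  intro p
  induction p with
  | zero =>
      intro v w
      simp [gpow, Matrix.det_isEmpty]
  | succ p ih =>
      intro v w
      show dfMul (gpow V p) (gForm V) v w = _
      unfold dfMul
      have hsum : ∀ (σ τ : Equiv.Perm (Fin (p + 1))),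
          ((Equiv.Perm.sign σ : ℤ) : ℝ) * ((Equiv.Perm.sign τ : ℤ) : ℝ) *
            (gpow V p (fun i => v (σ (Fin.castAdd 1 i))) (fun j => w (τ (Fin.castAdd 1 j))) *
              gForm V (fun i => v (σ (Fin.natAdd p i))) (fun j => w (τ (Fin.natAdd p j))))
          = ((Equiv.Perm.sign σ : ℤ) : ℝ) * ((Equiv.Perm.sign τ : ℤ) : ℝ) *
            ((p.factorial : ℝ) * (Matrix.of fun i j : Fin p =>
                (inner ℝ (v (σ (Fin.castAdd 1 i))) (w (τ (Fin.castAdd 1 j))) : ℝ)).det *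
              (inner ℝ (v (σ (Fin.natAdd p 0))) (w (τ (Fin.natAdd p 0))) : ℝ)) := by
        intro σ τ
        rw [ih]
        show _ * (_ * gForm V _ _) = _
        unfold gForm
        ring
      rw [Finset.sum_congr rfl fun σ _ => Finset.sum_congr rfl fun τ _ => hsum σ τ]
      rw [step (fun a b => (inner ℝ (v a) (w b) : ℝ))]
      have hfac : ((p.factorial * Nat.factorial 1 * p.factorial * Nat.factorial 1 : ℕ) : ℝ)
          = (p.factorial : ℝ) * (p.factorial : ℝ) := by
        push_cast [Nat.factorial_one]
        ring
      rw [hfac]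
      have hpos : (0 : ℝ) < (p.factorial : ℝ) := by
        exact_mod_cast Nat.factorial_pos p
      field_simp

/-- Full contraction as a sum over all index tuples. -/
private lemma fullContr_eq {V : Type*} [NormedAddCommGroup V] [InnerProductSpace ℝ V]
    [FiniteDimensional ℝ V] :
    ∀ (m : ℕ) (ω : DoubleForm V m m),
      dfFullContr m ω
        = ∑ f : Fin m → Fin (Module.finrank ℝ V),
            ω (fun i => stdOrthonormalBasis ℝ V (f i)) (fun i => stdOrthonormalBasis ℝ V (f i)) := by
  intro m
  induction m with
  | zero =>
      intro ω
      rw [Fintype.sum_unique (fun f : Fin 0 → Fin (Module.finrank ℝ V) =>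
        ω (fun i => stdOrthonormalBasis ℝ V (f i)) (fun i => stdOrthonormalBasis ℝ V (f i)))]
      show ω _ _ = _
      congr 1 <;> funext i <;> exact i.elim0
  | succ m ih =>
      intro ω
      show dfFullContr m (dfContr ω) = _
      rw [ih]
      unfold dfContr
      rw [← Equiv.sum_comp (Fin.consEquiv (fun _ : Fin (m + 1) => Fin (Module.finrank ℝ V)))
        (fun f => ω (fun i => stdOrthonormalBasis ℝ V (f i))
          (fun i => stdOrthonormalBasis ℝ V (f i)))]
      rw [Fintype.sum_prod_type]
      rw [Finset.sum_comm]
      refine Finset.sum_congr rfl fun f _ => Finset.sum_congr rfl fun a _ => ?_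
      have harg : (fun i => stdOrthonormalBasis ℝ V
            ((Fin.consEquiv (fun _ : Fin (m + 1) => Fin (Module.finrank ℝ V))) (f, a) i))
          = Fin.cons (stdOrthonormalBasis ℝ V f)
              (fun i => stdOrthonormalBasis ℝ V (a i)) := by
        funext i
        refine Fin.cases ?_ (fun j => ?_) i <;> simp [Fin.consEquiv]
      rw [harg]

private lemma det_gram_basis {d m : ℕ} (f : Fin m → Fin d) :
    (Matrix.of fun i j => if f i = f j then (1 : ℝ) else 0).det
      = if Function.Injective f then (1 : ℝ) else 0 := by
  by_cases hf : Function.Injective f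
  · rw [if_pos hf]
    have h1 : (Matrix.of fun i j => if f i = f j then (1 : ℝ) else 0) = 1 := by
      ext i j
      simp [Matrix.one_apply, hf.eq_iff]
    rw [h1, Matrix.det_one]
  · rw [if_neg hf]
    obtain ⟨i, j, hij, hne⟩ := Function.not_injective_iff.mp hf
    refine Matrix.det_zero_of_row_eq hne ?_
    funext k
    simp only [Matrix.of_apply]
    rw [hij]

end Aux

/-- On an `n`-dimensional inner product space, the full contraction of the
`p`-th power of the metric double form satisfies `c_g^p (g^p) = n! p! / (n-p)!`, `0 ≤ p ≤ n`. -/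
theorem full_contraction_metric_power
    {V : Type*} [NormedAddCommGroup V] [InnerProductSpace ℝ V] [FiniteDimensional ℝ V]
    (n p : ℕ) (hn : Module.finrank ℝ V = n) (hp : p ≤ n) :
    dfFullContr p (gpow V p) = ((n.factorial : ℝ) * (p.factorial : ℝ)) / ((n - p).factorial : ℝ) := by
  subst hn
  set d := Module.finrank ℝ V with hd
  rw [fullContr_eq]
  have he : ∀ i j, (inner ℝ (stdOrthonormalBasis ℝ V i) (stdOrthonormalBasis ℝ V j) : ℝ)
      = if i = j then 1 else 0 := by
    have := (stdOrthonormalBasis ℝ V).orthonormal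
    rw [orthonormal_iff_ite] at this
    exact this
  have hterm : ∀ f : Fin p → Fin d,
      gpow V p (fun i => stdOrthonormalBasis ℝ V (f i)) (fun i => stdOrthonormalBasis ℝ V (f i))
        = (p.factorial : ℝ) * (if Function.Injective f then (1 : ℝ) else 0) := by
    intro f
    rw [gpow_eq]
    congr 1
    have hM : (Matrix.of fun i j =>
          (inner ℝ (stdOrthonormalBasis ℝ V (f i)) (stdOrthonormalBasis ℝ V (f j)) : ℝ))
        = (Matrix.of fun i j => if f i = f j then (1 : ℝ) else 0) := by
      ext i j
      simp only [Matrix.of_apply]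
      rw [he]
    rw [hM, det_gram_basis]
  rw [Finset.sum_congr rfl fun f _ => hterm f]
  rw [← Finset.mul_sum]
  have hcount : ∑ f : Fin p → Fin d, (if Function.Injective f then (1 : ℝ) else 0)
      = (d.descFactorial p : ℝ) := by
    classical
    rw [Finset.sum_boole]
    congr 1
    rw [← Fintype.card_subtype]
    rw [Fintype.card_congr (Equiv.subtypeInjectiveEquivEmbedding (Fin p) (Fin d))]
    rw [Fintype.card_embedding_eq, Fintype.card_fin, Fintype.card_fin]
  rw [hcount]
  have hfac : ((d - p).factorial : ℝ) * (d.descFactorial p : ℝ) = (d.factorial : ℝ) := by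
    exact_mod_cast congrArg Nat.cast (Nat.factorial_mul_descFactorial hp)
  have hpos : (0 : ℝ) < ((d - p).factorial : ℝ) := by exact_mod_cast Nat.factorial_pos _
  field_simp
  nlinarith [hfac]
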